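/- If G is a disconnected finite simple graph and φ is an automorphism of the generalized Mycielskian μ_t(G) (for any t ≥ 1), then φ fixes the root w. -/

import Mathlib

open SimpleGraph

/-- The generalized Mycielskian `μ_t(G)`: levels `0,…,t` of copies of `V(G)`
plus a root `none`. Level-0 vertices are the original vertices. -/
def genMyc {V : Type*} (G : SimpleGraph V) (t : ℕ) :
    SimpleGraph (Option (Fin (t + 1) × V)) :=
  SimpleGraph.fromRel fun a b =>
    match a, b with
    | some (s, i), some (s', j) =>
        ((s : ℕ) = 0 ∧ (s' : ℕ) = 0 ∧ G.Adj i j) ∨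
        ((s' : ℕ) = (s : ℕ) + 1 ∧ G.Adj i j)
    | some (s, _), none => (s : ℕ) = t
    | _, _ => False

/-- The (traditional) Mycielskian `μ(G)`. -/
def myc {V : Type*} (G : SimpleGraph V) : SimpleGraph (Option (Fin 2 × V)) :=
  genMyc G 1

/-- The star `K_{1,m}` with center `0` and `m` leaves. -/
def starG (m : ℕ) : SimpleGraph (Fin (m + 1)) :=
  SimpleGraph.fromRel fun a _ => a = 0

/-- A `d`-coloring is distinguishing if only the trivial automorphism preserves it. -/
def IsDistinguishing {V : Type*} (H : SimpleGraph V) (d : ℕ) (c : V → Fin d) : Prop :=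
  ∀ φ : H ≃g H, (∀ v, c (φ v) = c v) → ∀ v, φ v = v

/-- The distinguishing number of a graph. -/
noncomputable def distNum {V : Type*} (H : SimpleGraph V) : ℕ :=
  sInf {d | ∃ c : V → Fin d, IsDistinguishing H d c}

namespace Aux
variable {V : Type*}

def del {α : Type*} (H : SimpleGraph α) (v : α) : SimpleGraph α where
  Adj x y := H.Adj x y ∧ x ≠ v ∧ y ≠ v
  symm := ⟨fun _ _ h => ⟨h.1.symm, h.2.2, h.2.1⟩⟩
  loopless := ⟨fun x h => H.loopless.irrefl x h.1⟩

def alt (x y : V) (n : ℕ) : V := if Even n then x else y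

lemma alt_succ (x y : V) (n : ℕ) : alt x y (n+1) = alt y x n := by
  by_cases h : Even n <;> simp [alt, Nat.even_add_one, h]

variable {G : SimpleGraph V} {t : ℕ}

lemma ne_lvl {r r' : ℕ} {h : r < t+1} {h' : r' < t+1} {x y : V} (hne : r ≠ r') :
    (some (⟨r, h⟩, x) : Option (Fin (t+1) × V)) ≠ some (⟨r', h'⟩, y) := by
  simp only [ne_eq, Option.some.injEq, Prod.mk.injEq, Fin.mk.injEq, not_and]
  intro hc; omega

lemma ne_vtx {r r' : ℕ} {h : r < t+1} {h' : r' < t+1} {x y : V} (hne : x ≠ y) :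
    (some (⟨r, h⟩, x) : Option (Fin (t+1) × V)) ≠ some (⟨r', h'⟩, y) := by
  simp only [ne_eq, Option.some.injEq, Prod.mk.injEq, Fin.mk.injEq, not_and]
  intro _; exact hne

lemma adj_up {r : ℕ} (h1 : r + 1 ≤ t) {x y : V} (hxy : G.Adj x y) :
    (genMyc G t).Adj (some (⟨r, by omega⟩, x)) (some (⟨r+1, by omega⟩, y)) := by
  unfold genMyc
  rw [SimpleGraph.fromRel_adj]
  exact ⟨ne_lvl (by omega), Or.inl (Or.inr ⟨rfl, hxy⟩)⟩

lemma adj_zero (ht : 0 < t + 1) {x y : V} (hxy : G.Adj x y) :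
    (genMyc G t).Adj (some (⟨0, ht⟩, x)) (some (⟨0, ht⟩, y)) := by
  unfold genMyc
  rw [SimpleGraph.fromRel_adj]
  exact ⟨ne_vtx hxy.ne, Or.inl (Or.inl ⟨rfl, rfl, hxy⟩)⟩

lemma adj_top {x : V} :
    (genMyc G t).Adj (some (⟨t, by omega⟩, x)) none := by
  unfold genMyc
  rw [SimpleGraph.fromRel_adj]
  exact ⟨by simp, Or.inl rfl⟩

lemma adj_extract {s s' : Fin (t+1)} {i j : V}
    (h : (genMyc G t).Adj (some (s, i)) (some (s', j))) :
    G.Adj i j ∧ (((s:ℕ) = 0 ∧ (s':ℕ) = 0) ∨ (s':ℕ) = (s:ℕ) + 1 ∨ (s:ℕ) = (s':ℕ) + 1) := by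
  unfold genMyc at h
  rw [SimpleGraph.fromRel_adj] at h
  obtain ⟨-, h | h⟩ := h
  · rcases h with ⟨h1, h2, h3⟩ | ⟨h1, h3⟩
    · exact ⟨h3, Or.inl ⟨h1, h2⟩⟩
    · exact ⟨h3, Or.inr (Or.inl h1)⟩
  · rcases h with ⟨h1, h2, h3⟩ | ⟨h1, h3⟩
    · exact ⟨h3.symm, Or.inl ⟨h2, h1⟩⟩
    · exact ⟨h3.symm, Or.inr (Or.inr h1)⟩

lemma adj_none_extract {a : Option (Fin (t+1) × V)}
    (h : (genMyc G t).Adj none a) : ∃ s i, a = some (s, i) ∧ (s:ℕ) = t := by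
  unfold genMyc at h
  rw [SimpleGraph.fromRel_adj] at h
  obtain ⟨hne, h | h⟩ := h
  · cases a <;> simp_all
  · match a, h with
    | some (s, i), h => exact ⟨s, i, rfl, h⟩

/-- not equal to deleted vertex -/
lemma ne_del {r : ℕ} {h : r < t+1} {x : V} {σ : Fin (t+1)} {k : V}
    (hne : r ≠ (σ:ℕ) ∨ x ≠ k) :
    (some (⟨r, h⟩, x) : Option (Fin (t+1) × V)) ≠ some (σ, k) := by
  simp only [ne_eq, Option.some.injEq, Prod.mk.injEq, Fin.ext_iff, Fin.val_mk, not_and]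
  rcases hne with hne | hne
  · intro hc; exact absurd hc hne
  · intro _; exact hne

/-- Climb from level `r` to the root, alternating between `x` and `y`,
avoiding the deleted vertex `(σ, k)`. -/
lemma climb (σ : Fin (t+1)) (k : V) (r : ℕ) (x y : V) (hr : r ≤ t)
    (hxy : G.Adj x y)
    (hc : (σ:ℕ) < r ∨ alt x y ((σ:ℕ) - r) ≠ k) :
    (del (genMyc G t) (some (σ, k))).Reachable (some (⟨r, by omega⟩, x)) none := by
  have hne1 : (some (⟨r, by omega⟩, x) : Option (Fin (t+1) × V)) ≠ some (σ, k) := by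
    rcases hc with hc | hc
    · exact ne_del (Or.inl (by omega))
    · rcases Nat.lt_or_ge (σ:ℕ) r with h | h
      · exact ne_del (Or.inl (by omega))
      · rcases Nat.eq_or_lt_of_le h with h | h
        · refine ne_del (Or.inr ?_)
          have : (σ:ℕ) - r = 0 := by omega
          simpa [alt, this] using hc
        · exact ne_del (Or.inl (by omega))
  rcases Nat.eq_or_lt_of_le hr with heq | hlt
  · -- r = t : direct edge to root
    refine Adj.reachable ⟨?_, hne1, ?_⟩
    · have : (some (⟨r, by omega⟩, x) : Option (Fin (t+1) × V)) = some (⟨t, by omega⟩, x) := by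
        simp [heq]
      rw [this]; exact adj_top
    · simp
  · -- step up to (r+1, y) and recurse
    have hyx : G.Adj y x := hxy.symm
    have hne2 : (some (⟨r+1, by omega⟩, y) : Option (Fin (t+1) × V)) ≠ some (σ, k) := by
      rcases Nat.lt_or_ge (σ:ℕ) (r+1) with h | h
      · exact ne_del (Or.inl (by omega))
      · refine ne_del ?_
        rcases Nat.eq_or_lt_of_le h with h | h
        · refine Or.inr ?_
          rcases hc with hc | hc
          · omega
          · have h1 : (σ:ℕ) - r = 1 := by omega
            simpa [alt, h1] using hc
        · exact Or.inl (by omega)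
    have step : (del (genMyc G t) (some (σ, k))).Adj
        (some (⟨r, by omega⟩, x)) (some (⟨r+1, by omega⟩, y)) :=
      ⟨adj_up (by omega) hxy, hne1, hne2⟩
    have rec' := climb σ k (r+1) y x (by omega) hyx (by
      rcases hc with hc | hc
      · exact Or.inl (by omega)
      · rcases Nat.lt_or_ge (σ:ℕ) (r+1) with h | h
        · exact Or.inl h
        · refine Or.inr ?_
          have h1 : (σ:ℕ) - r = ((σ:ℕ) - (r+1)) + 1 := by omega
          rwa [h1, alt_succ] at hc)
    exact step.reachable.trans rec'
termination_by t - r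

/-- Descend from level `r` to level 0, alternating, when the deleted vertex
is at a level above `r`. -/
lemma descend (σ : Fin (t+1)) (k : V) (r : ℕ) (x y : V) (hr : r ≤ t)
    (hxy : G.Adj x y) (hs : r < (σ:ℕ)) :
    (del (genMyc G t) (some (σ, k))).Reachable
      (some (⟨r, by omega⟩, x)) (some (⟨0, by omega⟩, alt x y r)) := by
  induction r generalizing x y with
  | zero =>
    have : alt x y 0 = x := by simp [alt]
    rw [this]
  | succ n ih =>
    have step : (del (genMyc G t) (some (σ, k))).Adj
        (some (⟨n+1, by omega⟩, x)) (some (⟨n, by omega⟩, y)) := by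
      refine ⟨((genMyc G t).adj_symm (adj_up (by omega) hxy.symm) : _), ?_, ?_⟩
      · exact ne_del (Or.inl (by omega))
      · exact ne_del (Or.inl (by omega))
    have rec' := ih y x (by omega) hxy.symm (by omega)
    rw [alt_succ]
    exact step.reachable.trans rec'


/-- Every neighbor of a non-root vertex can reach the root avoiding that vertex. -/
lemma nbr_root (σ : Fin (t+1)) (k : V) {a : Option (Fin (t+1) × V)}
    (ha : (genMyc G t).Adj (some (σ, k)) a) :
    (del (genMyc G t) (some (σ, k))).Reachable a none := by
  match a with
  | none => exact Reachable.refl none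
  | some (ρ, j) =>
    obtain ⟨hkj, hlvl⟩ := adj_extract ha
    have hjk : G.Adj j k := hkj.symm
    have hform : (some (ρ, j) : Option (Fin (t+1) × V)) = some (⟨(ρ:ℕ), ρ.isLt⟩, j) := by
      simp
    have hρt : (ρ:ℕ) ≤ t := by omega
    rcases hlvl with ⟨hσ0, hρ0⟩ | hρ | hσ
    · rw [hform]
      refine climb σ k (ρ:ℕ) j k hρt hjk (Or.inr ?_)
      have h0 : (σ:ℕ) - (ρ:ℕ) = 0 := by omega
      simpa [alt, h0] using hjk.ne
    · rw [hform]
      exact climb σ k (ρ:ℕ) j k hρt hjk (Or.inl (by omega))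
    · -- σ = ρ + 1 : descend to level 0, switch, climb
      have hdes := descend σ k (ρ:ℕ) j k hρt hjk (by omega)
      rcases Nat.even_or_odd (ρ:ℕ) with he | ho
      · have h1 : alt j k (ρ:ℕ) = j := by simp [alt, he]
        rw [h1] at hdes
        have hsw : (del (genMyc G t) (some (σ, k))).Adj
            (some (⟨0, by omega⟩, j)) (some (⟨0, by omega⟩, k)) :=
          ⟨adj_zero (by omega) hjk, ne_del (Or.inl (by omega)), ne_del (Or.inl (by omega))⟩
        have hcl : (del (genMyc G t) (some (σ, k))).Reachable
            (some (⟨0, by omega⟩, k)) none := by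
          refine climb σ k 0 k j (by omega) hkj (Or.inr ?_)
          have hodd : ¬ Even ((σ:ℕ) - 0) := by
            simp only [Nat.sub_zero]
            rw [hσ, Nat.even_add_one, not_not]
            exact he
          have h2 : alt k j ((σ:ℕ) - 0) = j := by simp only [alt, if_neg hodd]
          rw [h2]
          exact hjk.ne
        rw [hform]
        exact (hdes.trans hsw.reachable).trans hcl
      · have h1 : alt j k (ρ:ℕ) = k := by simp [alt, Nat.not_even_iff_odd.mpr ho]
        rw [h1] at hdes
        have hsw : (del (genMyc G t) (some (σ, k))).Adj
            (some (⟨0, by omega⟩, k)) (some (⟨0, by omega⟩, j)) :=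
          ⟨adj_zero (by omega) hkj, ne_del (Or.inl (by omega)), ne_del (Or.inl (by omega))⟩
        have hcl : (del (genMyc G t) (some (σ, k))).Reachable
            (some (⟨0, by omega⟩, j)) none := by
          refine climb σ k 0 j k (by omega) hjk (Or.inr ?_)
          have hev : Even ((σ:ℕ) - 0) := by
            simp only [Nat.sub_zero]
            rw [hσ, Nat.even_add_one]
            exact Nat.not_even_iff_odd.mpr ho
          have h2 : alt j k ((σ:ℕ) - 0) = j := by simp only [alt, if_pos hev]
          rw [h2]
          exact hjk.ne
        rw [hform]
        exact (hdes.trans hsw.reachable).trans hcl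

/-- A walk avoiding the root projects to connectivity in `G`. -/
lemma walk_proj : ∀ {a b : Option (Fin (t+1) × V)},
    (del (genMyc G t) none).Walk a b →
    ∀ {s : Fin (t+1)} {i : V} {s' : Fin (t+1)} {j : V},
      a = some (s, i) → b = some (s', j) → G.Reachable i j := by
  intro a b w
  induction w with
  | nil =>
    intro s i s' j h1 h2
    rw [h1] at h2
    simp only [Option.some.injEq, Prod.mk.injEq] at h2
    exact h2.2 ▸ Reachable.refl i
  | @cons u v b hadj p ih =>
    intro s i s' j h1 h2
    subst h1
    obtain ⟨hμ, -, hc⟩ := hadj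
    match v, hc with
    | some (s2, i2), _ =>
      exact ((adj_extract hμ).1.reachable).trans (ih rfl h2)

def delHom {α : Type*} {H : SimpleGraph α} (φ : H ≃g H) (v : α) :
    del H v →g del H (φ v) where
  toFun := φ
  map_rel' := fun {x y} h =>
    ⟨φ.map_rel_iff.mpr h.1, fun he => h.2.1 (φ.toEquiv.injective he),
      fun he => h.2.2 (φ.toEquiv.injective he)⟩

end Aux

open Aux in
theorem stmt_4 {V : Type*} [Fintype V] [Nonempty V] (G : SimpleGraph V)
    (hG : ¬ G.Connected) (t : ℕ) (ht : 1 ≤ t)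
    (φ : genMyc G t ≃g genMyc G t) :
    φ none = none := by
  cases hφ : φ none with
  | none => rfl
  | some p =>
    exfalso
    obtain ⟨σ, k⟩ := p
    have hpre : ¬ G.Preconnected := fun h => hG ((connected_iff G).mpr ⟨h, ‹_›⟩)
    unfold SimpleGraph.Preconnected at hpre
    push_neg at hpre
    obtain ⟨i, j, hij⟩ := hpre
    set a : Option (Fin (t+1) × V) := some (⟨t, by omega⟩, i) with ha
    set b : Option (Fin (t+1) × V) := some (⟨t, by omega⟩, j) with hb
    have h1 : (genMyc G t).Adj none a := (adj_top (x := i)).symm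
    have h2 : (genMyc G t).Adj none b := (adj_top (x := j)).symm
    have h4 : (genMyc G t).Adj (some (σ, k)) (φ a) := by
      rw [← hφ]; exact φ.map_rel_iff.mpr h1
    have h5 : (genMyc G t).Adj (some (σ, k)) (φ b) := by
      rw [← hφ]; exact φ.map_rel_iff.mpr h2
    have h6 : (del (genMyc G t) (some (σ, k))).Reachable (φ a) (φ b) :=
      (nbr_root σ k h4).trans (nbr_root σ k h5).symm
    have h7 : (del (genMyc G t) (φ.symm (some (σ, k)))).Reachable
        (φ.symm (φ a)) (φ.symm (φ b)) := h6.map (delHom φ.symm (some (σ, k)))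
    rw [← hφ, φ.symm_apply_apply, φ.symm_apply_apply, φ.symm_apply_apply] at h7
    exact hij (walk_proj h7.some rfl rfl)
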